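/- Let G be a K_{t-1,t}-saturated n by n bipartite graph with exactly (2t-3)n - (t-1)(t-2) edges and minimum degree less than t-1 (with n sufficiently large in terms of t). Then there is a set S of t-2 vertices in one part adjacent to all vertices of the other part, and every other vertex on the same side as S has degree exactly t-1. -/

import Mathlib

open Finset

/-- An `n` by `n` bipartite graph, given by its edge set `E ⊆ U × U'`,
contains a copy of the complete bipartite graph with `a` vertices in `U`
and `b` vertices in `U'`. -/
def ContainsK (n : ℕ) (E : Finset (Fin n × Fin n)) (a b : ℕ) : Prop :=
  ∃ S T : Finset (Fin n), S.card = a ∧ T.card = b ∧ ∀ u ∈ S, ∀ v ∈ T, (u, v) ∈ E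

/-- Contains an (unordered) copy of `K_{s,t}`. -/
def ContainsKst (n : ℕ) (E : Finset (Fin n × Fin n)) (s t : ℕ) : Prop :=
  ContainsK n E s t ∨ ContainsK n E t s

/-- `K_{s,t}`-saturated: `K_{s,t}`-free, but adding any missing edge across
the bipartition creates a copy of `K_{s,t}`. -/
def SaturatedKst (n : ℕ) (E : Finset (Fin n × Fin n)) (s t : ℕ) : Prop :=
  ¬ ContainsKst n E s t ∧
    ∀ u v : Fin n, (u, v) ∉ E → ContainsKst n (insert (u, v) E) s t

/-- Degree of a vertex `u` on the `U` side. -/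
def degU (n : ℕ) (E : Finset (Fin n × Fin n)) (u : Fin n) : ℕ :=
  (E.filter (fun p => p.1 = u)).card

/-- Degree of a vertex `v` on the `U'` side. -/
def degV (n : ℕ) (E : Finset (Fin n × Fin n)) (v : Fin n) : ℕ :=
  (E.filter (fun p => p.2 = v)).card


/-- The neighborhood (on the `U'` side) of a vertex `u ∈ U`. -/
def nbhd (n : ℕ) (E : Finset (Fin n × Fin n)) (u : Fin n) : Finset (Fin n) :=
  (E.filter (fun p => p.1 = u)).image Prod.snd

lemma mem_nbhd {n : ℕ} {E : Finset (Fin n × Fin n)} {u y : Fin n} :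
    y ∈ nbhd n E u ↔ (u, y) ∈ E := by
  simp only [nbhd, Finset.mem_image, Finset.mem_filter]
  constructor
  · rintro ⟨p, ⟨hpE, hp1⟩, hp2⟩
    rwa [show p = (u, y) from Prod.ext hp1 hp2] at hpE
  · intro h
    exact ⟨(u, y), ⟨h, rfl⟩, rfl⟩

lemma nbhd_card (n : ℕ) (E : Finset (Fin n × Fin n)) (u : Fin n) :
    (nbhd n E u).card = degU n E u := by
  unfold nbhd degU
  apply Finset.card_image_of_injOn
  intro p hp q hq h
  simp only [Finset.coe_filter, Set.mem_setOf_eq] at hp hq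
  exact Prod.ext (hp.2.trans hq.2.symm) h

lemma force_new {n : ℕ} {E : Finset (Fin n × Fin n)} {u v : Fin n}
    {S T : Finset (Fin n)} {a b : ℕ} (hfree : ¬ ContainsK n E a b)
    (hS : S.card = a) (hT : T.card = b)
    (h : ∀ x ∈ S, ∀ y ∈ T, (x, y) ∈ insert (u, v) E) : u ∈ S ∧ v ∈ T := by
  by_contra hc
  apply hfree
  refine ⟨S, T, hS, hT, fun x hx y hy => ?_⟩
  rcases Finset.mem_insert.mp (h x hx y hy) with heq | hE
  · simp only [Prod.mk.injEq] at heq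
    exact absurd ⟨heq.1 ▸ hx, heq.2 ▸ hy⟩ hc
  · exact hE

lemma T_sub {n : ℕ} {E : Finset (Fin n × Fin n)} {u v : Fin n} {T : Finset (Fin n)}
    (h : ∀ y ∈ T, (u, y) ∈ insert (u, v) E) : T ⊆ insert v (nbhd n E u) := by
  intro y hy
  rcases Finset.mem_insert.mp (h y hy) with heq | hE
  · exact Finset.mem_insert.mpr (Or.inl (congrArg Prod.snd heq))
  · exact Finset.mem_insert.mpr (Or.inr (mem_nbhd.mpr hE))

/-- If a vertex `u` has a non-neighbor and the addition of an edge at `u`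
creates a copy, then `u` has degree at least `k`. -/
lemma sat_deg_lb {n k : ℕ} {E : Finset (Fin n × Fin n)} {u v : Fin n}
    (hfree : ¬ ContainsKst n E (k + 1) (k + 2))
    (hins : ContainsKst n (insert (u, v) E) (k + 1) (k + 2)) :
    k ≤ degU n E u := by
  have hfree1 : ¬ ContainsK n E (k + 1) (k + 2) := fun h => hfree (Or.inl h)
  have hfree2 : ¬ ContainsK n E (k + 2) (k + 1) := fun h => hfree (Or.inr h)
  have hnc := nbhd_card n E u
  rcases hins with ⟨S, T, hS, hT, h⟩ | ⟨S, T, hS, hT, h⟩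
  · obtain ⟨huS, hvT⟩ := force_new hfree1 hS hT h
    have hTs := T_sub (fun y hy => h u huS y hy)
    have h1 : T.card ≤ (nbhd n E u).card + 1 :=
      le_trans (Finset.card_le_card hTs) (Finset.card_insert_le _ _)
    omega
  · obtain ⟨huS, hvT⟩ := force_new hfree2 hS hT h
    have hTs := T_sub (fun y hy => h u huS y hy)
    have h1 : T.card ≤ (nbhd n E u).card + 1 :=
      le_trans (Finset.card_le_card hTs) (Finset.card_insert_le _ _)
    omega

/-- The main saturation step: if `u` has degree at most `k` and adding `(u,v)`
creates a copy, then the copy is in the `(k+2, k+1)` orientation,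
`T = insert v (nbhd u)` and there are `k+1` vertices `Q` (not containing `u`)
complete to `T` in `E`. -/
lemma sat_step {n k : ℕ} {E : Finset (Fin n × Fin n)} {u v : Fin n}
    (hfree : ¬ ContainsKst n E (k + 1) (k + 2))
    (hins : ContainsKst n (insert (u, v) E) (k + 1) (k + 2))
    (hdeg : (nbhd n E u).card ≤ k) :
    ∃ Q : Finset (Fin n), Q.card = k + 1 ∧ u ∉ Q ∧
      ∀ q ∈ Q, ∀ y ∈ insert v (nbhd n E u), (q, y) ∈ E := by
  have hfree1 : ¬ ContainsK n E (k + 1) (k + 2) := fun h => hfree (Or.inl h)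
  have hfree2 : ¬ ContainsK n E (k + 2) (k + 1) := fun h => hfree (Or.inr h)
  rcases hins with ⟨S, T, hS, hT, h⟩ | ⟨S, T, hS, hT, h⟩
  · exfalso
    obtain ⟨huS, hvT⟩ := force_new hfree1 hS hT h
    have hTs := T_sub (fun y hy => h u huS y hy)
    have h1 : T.card ≤ (nbhd n E u).card + 1 :=
      le_trans (Finset.card_le_card hTs) (Finset.card_insert_le _ _)
    omega
  · obtain ⟨huS, hvT⟩ := force_new hfree2 hS hT h
    have hTs := T_sub (fun y hy => h u huS y hy)
    have hle : (insert v (nbhd n E u)).card ≤ T.card := by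
      have := Finset.card_insert_le v (nbhd n E u)
      omega
    have hTeq : T = insert v (nbhd n E u) := Finset.eq_of_subset_of_card_le hTs hle
    refine ⟨S.erase u, ?_, Finset.notMem_erase u S, ?_⟩
    · rw [Finset.card_erase_of_mem huS, hS]
      omega
    · intro q hq y hy
      have hqS := Finset.mem_of_mem_erase hq
      have hqne := Finset.ne_of_mem_erase hq
      rcases Finset.mem_insert.mp (h q hqS y (hTeq ▸ hy)) with heq | hE
      · exact absurd (congrArg Prod.fst heq) hqne
      · exact hE

lemma mem_swap {n : ℕ} {E : Finset (Fin n × Fin n)} {u v : Fin n} :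
    (u, v) ∈ E.image Prod.swap ↔ (v, u) ∈ E := by
  simp only [Finset.mem_image, Prod.exists, Prod.swap_prod_mk, Prod.mk.injEq]
  constructor
  · rintro ⟨a, b, h, rfl, rfl⟩; exact h
  · intro h; exact ⟨v, u, h, rfl, rfl⟩

lemma containsK_swap {n : ℕ} {E : Finset (Fin n × Fin n)} {a b : ℕ} :
    ContainsK n (E.image Prod.swap) a b ↔ ContainsK n E b a := by
  constructor
  · rintro ⟨S, T, hS, hT, h⟩
    exact ⟨T, S, hT, hS, fun u hu v hv => mem_swap.mp (h v hv u hu)⟩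
  · rintro ⟨S, T, hS, hT, h⟩
    exact ⟨T, S, hT, hS, fun u hu v hv => mem_swap.mpr (h v hv u hu)⟩

lemma containsKst_swap {n : ℕ} {E : Finset (Fin n × Fin n)} {s t : ℕ} :
    ContainsKst n (E.image Prod.swap) s t ↔ ContainsKst n E s t := by
  unfold ContainsKst
  rw [containsK_swap, containsK_swap]
  exact or_comm

lemma saturated_swap {n : ℕ} {E : Finset (Fin n × Fin n)} {s t : ℕ}
    (h : SaturatedKst n E s t) : SaturatedKst n (E.image Prod.swap) s t := by
  obtain ⟨hfree, hadd⟩ := h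
  constructor
  · rw [containsKst_swap]; exact hfree
  · intro u v huv
    have hvu : (v, u) ∉ E := fun h => huv (mem_swap.mpr h)
    have h2 := hadd v u hvu
    have himg : insert (u, v) (E.image Prod.swap) = (insert (v, u) E).image Prod.swap := by
      rw [Finset.image_insert, Prod.swap_prod_mk]
    rw [himg, containsKst_swap]
    exact h2

lemma degU_swap {n : ℕ} {E : Finset (Fin n × Fin n)} {u : Fin n} :
    degU n (E.image Prod.swap) u = degV n E u := by
  unfold degU degV
  rw [Finset.filter_image]
  simp only [Prod.fst_swap]
  rw [Finset.card_image_of_injective _ Prod.swap_injective]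

lemma degV_swap {n : ℕ} {E : Finset (Fin n × Fin n)} {v : Fin n} :
    degV n (E.image Prod.swap) v = degU n E v := by
  unfold degU degV
  rw [Finset.filter_image]
  simp only [Prod.snd_swap]
  rw [Finset.card_image_of_injective _ Prod.swap_injective]

lemma main_lemma {k n : ℕ} (hn : 2 * k + 3 ≤ n) (E : Finset (Fin n × Fin n))
    (hsat : SaturatedKst n E (k + 1) (k + 2))
    (hcard : E.card + (k + 1) * k = (2 * k + 1) * n)
    (u₀ : Fin n) (hu : degU n E u₀ < k + 1) :
    ∃ S' : Finset (Fin n), S'.card = k ∧ (∀ v ∈ S', ∀ u : Fin n, (u, v) ∈ E) ∧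
      ∀ v : Fin n, v ∉ S' → degV n E v = k + 1 := by
  obtain ⟨hfree, hadd⟩ := hsat
  set W : Finset (Fin n) := nbhd n E u₀ with hWdef
  have hWdeg : W.card = degU n E u₀ := nbhd_card n E u₀
  -- u₀ has degree exactly k
  have hWk : W.card = k := by
    obtain ⟨v₁, hv₁⟩ : ∃ v : Fin n, v ∉ W := by
      by_contra hc
      push_neg at hc
      have hsub : (Finset.univ : Finset (Fin n)) ⊆ W := fun x _ => hc x
      have := Finset.card_le_card hsub
      simp only [Finset.card_univ, Fintype.card_fin] at this
      omega
    have hvE : (u₀, v₁) ∉ E := fun h => hv₁ (mem_nbhd.mpr h)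
    have := sat_deg_lb hfree (hadd u₀ v₁ hvE)
    omega
  -- X : vertices of U complete to W
  set X : Finset (Fin n) := Finset.univ.filter (fun u => ∀ w ∈ W, (u, w) ∈ E) with hXdef
  have hmemX : ∀ u : Fin n, u ∈ X ↔ ∀ w ∈ W, (u, w) ∈ E := by
    intro u
    simp [hXdef]
  -- every vertex not in X has degree at least k
  have hXc_lb : ∀ u : Fin n, u ∉ X → k ≤ degU n E u := by
    intro u hu'
    rw [hmemX] at hu'
    push_neg at hu'
    obtain ⟨w, hwW, hwE⟩ := hu'
    exact sat_deg_lb hfree (hadd u w hwE)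
  -- for each v ∉ W, there are k+1 vertices of X adjacent to v
  have hAv : ∀ v : Fin n, v ∉ W → ∃ A : Finset (Fin n), A.card = k + 1 ∧
      ∀ a ∈ A, a ∈ X ∧ (a, v) ∈ E := by
    intro v hv
    have hvE : (u₀, v) ∉ E := fun h => hv (mem_nbhd.mpr h)
    obtain ⟨Q, hQcard, _, hQ⟩ := sat_step hfree (hadd u₀ v hvE) (le_of_eq hWk)
    refine ⟨Q, hQcard, fun a ha => ⟨?_, ?_⟩⟩
    · rw [hmemX]
      intro w hw
      exact hQ a ha w (Finset.mem_insert.mpr (Or.inr hw))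
    · exact hQ a ha v (Finset.mem_insert_self v _)
  -- the counting
  set F : Finset (Fin n × Fin n) := E.filter (fun p => p.1 ∈ X ∧ p.2 ∉ W) with hFdef
  have hsum : E.card = ∑ u : Fin n, degU n E u := by
    unfold degU
    exact Finset.card_eq_sum_card_fiberwise (fun p _ => Finset.mem_univ p.1)
  have hsplitU : ∑ u ∈ X, degU n E u + ∑ u ∈ Xᶜ, degU n E u = ∑ u : Fin n, degU n E u :=
    Finset.sum_add_sum_compl X _
  -- degrees of vertices in X split as k + (edges to outside W)
  have hdeg_split : ∀ u ∈ X, degU n E u = k + (F.filter (fun p => p.1 = u)).card := by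
    intro u huX
    have h1 : ((E.filter (fun p => p.1 = u)).filter (fun p => p.2 ∈ W)).card +
        ((E.filter (fun p => p.1 = u)).filter (fun p => ¬ p.2 ∈ W)).card =
        (E.filter (fun p => p.1 = u)).card :=
      Finset.card_filter_add_card_filter_not _
    have h2 : ((E.filter (fun p => p.1 = u)).filter (fun p => p.2 ∈ W)).card = k := by
      rw [← hWk]
      apply le_antisymm
      · apply Finset.card_le_card_of_injOn Prod.snd
        · intro p hp
          simp only [Finset.coe_filter, Set.mem_setOf_eq, Finset.mem_filter] at hp
          exact hp.2
        · intro p hp q hq h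
          simp only [Finset.coe_filter, Set.mem_setOf_eq, Finset.mem_filter] at hp hq
          exact Prod.ext (hp.1.2.trans hq.1.2.symm) h
      · apply Finset.card_le_card_of_injOn (fun w => (u, w))
        · intro w hw
          exact Finset.mem_filter.mpr ⟨Finset.mem_filter.mpr ⟨(hmemX u).mp huX w hw, rfl⟩, hw⟩
        · intro a _ b _ hab
          exact congrArg Prod.snd hab
    have h3 : (E.filter (fun p => p.1 = u)).filter (fun p => ¬ p.2 ∈ W) =
        F.filter (fun p => p.1 = u) := by
      ext p
      simp only [hFdef, Finset.mem_filter]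
      constructor
      · rintro ⟨⟨hpE, hp1⟩, hp2⟩
        exact ⟨⟨hpE, hp1 ▸ huX, hp2⟩, hp1⟩
      · rintro ⟨⟨hpE, _, hp2⟩, hp1⟩
        exact ⟨⟨hpE, hp1⟩, hp2⟩
    have h4 := congrArg Finset.card h3
    unfold degU
    omega
  have hXsum : ∑ u ∈ X, degU n E u = X.card * k + F.card := by
    have h1 : ∑ u ∈ X, degU n E u = ∑ u ∈ X, (k + (F.filter (fun p => p.1 = u)).card) :=
      Finset.sum_congr rfl hdeg_split
    have h2 : F.card = ∑ u ∈ X, (F.filter (fun p => p.1 = u)).card :=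
      Finset.card_eq_sum_card_fiberwise (fun p hp => by
        simp only [hFdef, Finset.coe_filter, Set.mem_setOf_eq, Finset.mem_filter] at hp
        exact hp.2.1)
    rw [h1, Finset.sum_add_distrib, Finset.sum_const, smul_eq_mul, ← h2]
  have hFsplit : F.card = ∑ v ∈ Wᶜ, (F.filter (fun p => p.2 = v)).card :=
    Finset.card_eq_sum_card_fiberwise (fun p hp => by
      simp only [hFdef, Finset.coe_filter, Set.mem_setOf_eq, Finset.mem_filter] at hp
      exact Finset.mem_compl.mpr hp.2.2)
  have hvlb : ∀ v ∈ Wᶜ, k + 1 ≤ (F.filter (fun p => p.2 = v)).card := by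
    intro v hv
    obtain ⟨A, hAcard, hA⟩ := hAv v (Finset.mem_compl.mp hv)
    rw [← hAcard]
    apply Finset.card_le_card_of_injOn (fun a => (a, v))
    · intro a ha
      refine Finset.mem_filter.mpr ⟨?_, rfl⟩
      rw [hFdef]
      exact Finset.mem_filter.mpr ⟨(hA a ha).2, (hA a ha).1, Finset.mem_compl.mp hv⟩
    · intro a _ b _ hab
      exact congrArg Prod.fst hab
  have hcc : Wᶜ.card = n - k := by
    rw [Finset.card_compl, hWk, Fintype.card_fin]
  have hxc : X.card + Xᶜ.card = n := by
    rw [Finset.card_add_card_compl, Fintype.card_fin]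
  -- the equality versions
  have hFge : (n - k) * (k + 1) ≤ F.card := by
    rw [hFsplit]
    calc (n - k) * (k + 1) = ∑ _v ∈ Wᶜ, (k + 1) := by
          rw [Finset.sum_const, hcc, smul_eq_mul]
    _ ≤ ∑ v ∈ Wᶜ, (F.filter (fun p => p.2 = v)).card := Finset.sum_le_sum hvlb
  have hXcge : Xᶜ.card * k ≤ ∑ u ∈ Xᶜ, degU n E u := by
    calc Xᶜ.card * k = ∑ _u ∈ Xᶜ, k := by rw [Finset.sum_const, smul_eq_mul]
    _ ≤ ∑ u ∈ Xᶜ, degU n E u :=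
        Finset.sum_le_sum (fun u hu' => hXc_lb u (Finset.mem_compl.mp hu'))
  have hE : E.card = k * n + (n - k) * (k + 1) := by
    obtain ⟨m, rfl⟩ : ∃ m, n = k + m := ⟨n - k, by omega⟩
    have hmk : k + m - k = m := by omega
    rw [hmk]
    have hr : (2 * k + 1) * (k + m) = (k * (k + m) + m * (k + 1)) + (k + 1) * k := by ring
    linarith [hcard]
  have hchain : X.card * k + F.card + ∑ u ∈ Xᶜ, degU n E u = k * n + (n - k) * (k + 1) := by
    rw [← hE, hsum, ← hsplitU, hXsum]
  have hmulsplit : X.card * k + Xᶜ.card * k = k * n := by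
    rw [← Nat.add_mul, hxc, Nat.mul_comm]
  have hF_eq : F.card = (n - k) * (k + 1) := by linarith
  have hXc_eq : ∑ u ∈ Xᶜ, degU n E u = Xᶜ.card * k := by linarith
  -- pointwise equalities
  have hE1 : ∀ u : Fin n, u ∉ X → degU n E u = k := by
    intro u hu'
    by_contra hne
    have hgt : k < degU n E u :=
      lt_of_le_of_ne (hXc_lb u hu') (Ne.symm hne)
    have hstrict : ∑ _x ∈ Xᶜ, k < ∑ x ∈ Xᶜ, degU n E x :=
      Finset.sum_lt_sum (fun x hx => hXc_lb x (Finset.mem_compl.mp hx))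
        ⟨u, Finset.mem_compl.mpr hu', hgt⟩
    rw [Finset.sum_const, smul_eq_mul] at hstrict
    linarith
  have hE2 : ∀ v : Fin n, v ∉ W → (F.filter (fun p => p.2 = v)).card = k + 1 := by
    intro v hv
    by_contra hne
    have hgt : k + 1 < (F.filter (fun p => p.2 = v)).card :=
      lt_of_le_of_ne (hvlb v (Finset.mem_compl.mpr hv)) (Ne.symm hne)
    have hstrict : ∑ _x ∈ Wᶜ, (k + 1) < ∑ x ∈ Wᶜ, (F.filter (fun p => p.2 = x)).card :=
      Finset.sum_lt_sum hvlb ⟨v, Finset.mem_compl.mpr hv, hgt⟩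
    rw [Finset.sum_const, hcc, smul_eq_mul] at hstrict
    linarith [hFsplit]
  -- X is everything
  have hXuniv : ∀ u : Fin n, u ∈ X := by
    by_contra hc
    push_neg at hc
    obtain ⟨u', hu'⟩ := hc
    have hdu : degU n E u' = k := hE1 u' hu'
    have hNu : (nbhd n E u').card = k := by rw [nbhd_card]; exact hdu
    -- u' has a neighbor outside W
    obtain ⟨v', hv'N, hv'W⟩ : ∃ v', v' ∈ nbhd n E u' ∧ v' ∉ W := by
      by_contra hcc'
      push_neg at hcc'
      have hsub : nbhd n E u' ⊆ W := fun y hy => hcc' y hy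
      have heq : nbhd n E u' = W :=
        Finset.eq_of_subset_of_card_le hsub (by omega)
      apply hu'
      rw [hmemX]
      intro w hw
      exact mem_nbhd.mp (heq ▸ hw)
    -- pick v outside W and outside N(u')
    obtain ⟨v, hvW, hvN⟩ : ∃ v : Fin n, v ∉ W ∧ v ∉ nbhd n E u' := by
      by_contra hcc'
      push_neg at hcc'
      have hsub : (Finset.univ : Finset (Fin n)) ⊆ W ∪ nbhd n E u' := by
        intro x _
        by_cases hx : x ∈ W
        · exact Finset.mem_union_left _ hx
        · exact Finset.mem_union_right _ (hcc' x hx)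
      have h1 := Finset.card_le_card hsub
      have h2 := Finset.card_union_le W (nbhd n E u')
      simp only [Finset.card_univ, Fintype.card_fin] at h1
      omega
    have hvE : (u', v) ∉ E := fun h => hvN (mem_nbhd.mpr h)
    obtain ⟨Q, hQcard, hQu, hQ⟩ := sat_step hfree (hadd u' v hvE) (le_of_eq hNu)
    by_cases hQX : ∀ q ∈ Q, q ∈ X
    · -- build a K_{k+1,k+2}
      apply hfree
      left
      refine ⟨Q, insert v (insert v' W), hQcard, ?_, ?_⟩
      · rw [Finset.card_insert_of_notMem, Finset.card_insert_of_notMem hv'W, hWk]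
        intro hmem
        rcases Finset.mem_insert.mp hmem with h | h
        · exact hvN (h ▸ hv'N)
        · exact hvW h
      · intro q hq y hy
        rcases Finset.mem_insert.mp hy with rfl | hy'
        · exact hQ q hq y (Finset.mem_insert_self _ _)
        rcases Finset.mem_insert.mp hy' with rfl | hyW
        · exact hQ q hq y (Finset.mem_insert.mpr (Or.inr hv'N))
        · exact (hmemX q).mp (hQX q hq) y hyW
    · -- some q ∉ X has degree k but k+1 neighbors
      push_neg at hQX
      obtain ⟨q, hqQ, hqX⟩ := hQX
      have hdq : degU n E q = k := hE1 q hqX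
      have hsub : insert v (nbhd n E u') ⊆ nbhd n E q := by
        intro y hy
        exact mem_nbhd.mpr (hQ q hqQ y hy)
      have h1 := Finset.card_le_card hsub
      have h2 : (insert v (nbhd n E u')).card = k + 1 := by
        rw [Finset.card_insert_of_notMem hvN, hNu]
      have h3 := nbhd_card n E q
      omega
  -- conclusions
  refine ⟨W, hWk, ?_, ?_⟩
  · intro w hw u
    exact (hmemX u).mp (hXuniv u) w hw
  · intro v hv
    have h1 : E.filter (fun p => p.2 = v) = F.filter (fun p => p.2 = v) := by
      ext p
      simp only [hFdef, Finset.mem_filter]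
      constructor
      · rintro ⟨hpE, hp2⟩
        exact ⟨⟨hpE, hXuniv p.1, hp2 ▸ hv⟩, hp2⟩
      · rintro ⟨⟨hpE, _, _⟩, hp2⟩
        exact ⟨hpE, hp2⟩
    unfold degV
    rw [h1]
    exact hE2 v hv

/-- an extremal `K_{t-1,t}`-saturated `n` by `n` bipartite graph
(with exactly `(2t-3)n - (t-1)(t-2)` edges) of minimum degree less than `t-1`
has, on one of its sides, a set `S` of `t-2` vertices that is complete to the
other side, with all vertices outside `S` on the same side of degree exactly
`t-1` (i.e. it lies in the family `F^n_{t-1,t}`). -/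
theorem stmt9 (t : ℕ) (ht : 2 ≤ t) :
    ∃ N : ℕ, ∀ n : ℕ, N ≤ n →
      ∀ E : Finset (Fin n × Fin n),
        SaturatedKst n E (t - 1) t →
        E.card + (t - 1) * (t - 2) = (2 * t - 3) * n →
        ((∃ u : Fin n, degU n E u < t - 1) ∨ (∃ v : Fin n, degV n E v < t - 1)) →
        (∃ S : Finset (Fin n), S.card = t - 2 ∧
            (∀ u ∈ S, ∀ v : Fin n, (u, v) ∈ E) ∧
            (∀ u : Fin n, u ∉ S → degU n E u = t - 1)) ∨
        (∃ S' : Finset (Fin n), S'.card = t - 2 ∧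
            (∀ v ∈ S', ∀ u : Fin n, (u, v) ∈ E) ∧
            (∀ v : Fin n, v ∉ S' → degV n E v = t - 1)) := by
  obtain ⟨k, rfl⟩ : ∃ k, t = k + 2 := ⟨t - 2, by omega⟩
  have e1 : k + 2 - 1 = k + 1 := by omega
  have e2 : k + 2 - 2 = k := by omega
  have e3 : 2 * (k + 2) - 3 = 2 * k + 1 := by omega
  refine ⟨2 * k + 3, fun n hn E hsat hcard hmin => ?_⟩
  rw [e1] at hsat
  rw [e1, e2, e3] at hcard
  rw [e1] at hmin
  rw [e1, e2]
  rcases hmin with ⟨u, hu⟩ | ⟨v, hv⟩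
  · right
    exact main_lemma hn E hsat hcard u hu
  · left
    have hsat' := saturated_swap hsat
    have hcard' : (E.image Prod.swap).card + (k + 1) * k = (2 * k + 1) * n := by
      rw [Finset.card_image_of_injective _ Prod.swap_injective]
      exact hcard
    have hv' : degU n (E.image Prod.swap) v < k + 1 := by
      rw [degU_swap]; exact hv
    obtain ⟨S', hcardS, hcomp, hdeg⟩ := main_lemma hn (E.image Prod.swap) hsat' hcard' v hv'
    refine ⟨S', hcardS, ?_, ?_⟩
    · intro x hx y
      exact mem_swap.mp (hcomp x hx y)
    · intro x hx
      rw [← degV_swap]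
      exact hdeg x hx
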